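/- arXiv:1407.3261 — 5 statements merged into one kernel-verified Lean document; each statement's English description precedes it below -/
import Mathlib

section
/- For an odd positive integer c and an integer d coprime to c, the Jacobi symbol satisfies (d/c) = (-1)^{(1/2)((c-1)/2 - 6c·s(d,c))}, where s(d,c) is the Dedekind sum. -/
/-- The sawtooth function `((x))`. -/
def dedekindSaw (x : ℚ) : ℚ := if Int.fract x = 0 then 0 else Int.fract x - 1/2

/-- The Dedekind sum `s(h,k) = ∑_{n=1}^{k} ((hn/k))((n/k))`. -/
noncomputable def dedekindSum (h k : ℤ) : ℚ :=
  ∑ n ∈ Finset.Icc (1 : ℤ) k, dedekindSaw ((h : ℚ) * n / k) * dedekindSaw ((n : ℚ) / k)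

open Finset

namespace DedekindJacobi

lemma div_eq_of {k a q r : ℕ} (hk : 0 < k) (h : a = k * q + r) (hr : r < k) : a / k = q := by
  subst h; rw [Nat.mul_add_div hk, Nat.div_eq_of_lt hr, add_zero]

def G (h k : ℕ) : ℕ := ∑ n ∈ Finset.Ico 1 (k / 2 + 1), n * h / k

/-- remainder -/
def rr (h k n : ℕ) : ℕ := n * h % k
/-- quotient -/
def ff (h k n : ℕ) : ℕ := n * h / k

lemma rr_ff (h k n : ℕ) : k * ff h k n + rr h k n = n * h := Nat.div_add_mod _ _

lemma fract_nat_div (a b : ℕ) (hb : 0 < b) :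
    Int.fract ((a : ℚ) / b) = ((a % b : ℕ) : ℚ) / b := by
  conv_lhs => rw [← Nat.div_add_mod a b]
  have hb' : (b : ℚ) ≠ 0 := by positivity
  have h1 : (((b * (a / b) + a % b : ℕ) : ℚ)) / b
      = ((a / b : ℕ) : ℚ) + ((a % b : ℕ) : ℚ) / b := by
    rw [Nat.cast_add, Nat.cast_mul, add_div, mul_div_cancel_left₀ _ hb']
  rw [h1, Int.fract_natCast_add, Int.fract_eq_self.mpr]
  constructor
  · positivity
  · rw [div_lt_one (by positivity)]
    exact_mod_cast Nat.mod_lt a hb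

lemma saw_natCast (a : ℕ) : dedekindSaw ((a : ℚ)) = 0 := by
  simp [dedekindSaw, Int.fract_natCast]

lemma saw_of_mod (a b : ℕ) (hb : 0 < b) (hne : a % b ≠ 0) :
    dedekindSaw ((a : ℚ) / b) = ((a % b : ℕ) : ℚ) / b - 1/2 := by
  rw [dedekindSaw, fract_nat_div a b hb, if_neg]
  intro h
  rw [div_eq_zero_iff] at h
  rcases h with h | h
  · exact hne (by exact_mod_cast h)
  · exact (by positivity : (b:ℚ) ≠ 0) h


lemma sum_Ico_id (k : ℕ) : 2 * (∑ n ∈ Finset.Ico 1 k, (n : ℤ)) = k * ((k:ℤ) - 1) := by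
  induction k with
  | zero => simp
  | succ k ih =>
    by_cases hk0 : k = 0
    · subst hk0; simp
    rw [Finset.sum_Ico_succ_top (by omega : 1 ≤ k)]
    push_cast
    linear_combination ih

lemma sum_Ico_sq (k : ℕ) : 6 * (∑ n ∈ Finset.Ico 1 k, (n : ℤ)^2) = k * ((k:ℤ) - 1) * (2*k - 1) := by
  induction k with
  | zero => simp
  | succ k ih =>
    by_cases hk0 : k = 0
    · subst hk0; simp
    rw [Finset.sum_Ico_succ_top (by omega : 1 ≤ k)]
    push_cast
    linear_combination ih

theorem div_eq_filter_card' {a b c : ℕ} (hb0 : 0 < b) (hc : a / b ≤ c) :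
    a / b = #{x ∈ Ico 1 (c + 1) | x * b ≤ a} :=
  calc
    a / b = #(Ico 1 (a / b + 1)) := by simp
    _ = #{x ∈ Ico 1 (c + 1) | x * b ≤ a} :=
      congr_arg _ <| Finset.ext fun x => by
        have : x * b ≤ a → x ≤ c := fun h => le_trans (by rwa [Nat.le_div_iff_mul_le hb0]) hc
        simp [Nat.lt_succ_iff, Nat.le_div_iff_mul_le hb0]; tauto

theorem sum_Ico_eq_card_lt' {p q : ℕ} (hp0 : 0 < p) :
    ∑ a ∈ Ico 1 (p / 2 + 1), a * q / p =
      #{x ∈ Ico 1 (p / 2 + 1) ×ˢ Ico 1 (q / 2 + 1) | x.2 * p ≤ x.1 * q} :=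
  calc
    ∑ a ∈ Ico 1 (p / 2 + 1), a * q / p =
        ∑ a ∈ Ico 1 (p / 2 + 1), #{x ∈ Ico 1 (q / 2 + 1) | x * p ≤ a * q} :=
      Finset.sum_congr rfl fun x hx => div_eq_filter_card' hp0 <|
        calc
          x * q / p ≤ p / 2 * q / p := by have := Nat.lt_succ_iff.mp (mem_Ico.mp hx).2; gcongr
          _ ≤ _ := Nat.div_mul_div_le_div _ _ _
    _ = _ := by
      rw [← card_sigma]
      exact card_nbij' (fun a ↦ ⟨a.1, a.2⟩) (fun a ↦ ⟨a.1, a.2⟩)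
        (by simp +contextual only [Set.MapsTo, mem_coe, mem_filter, mem_sigma, and_self_iff,
          forall_true_iff, mem_product])
        (by simp +contextual only [Set.MapsTo, mem_coe, mem_filter, mem_sigma, and_self_iff,
          forall_true_iff, mem_product]) (fun _ _ ↦ rfl) (fun _ _ ↦ rfl)

theorem lattice {p q : ℕ} (hp0 : 0 < p) (hq0 : 0 < q) (hpq : Nat.Coprime p q) :
    (∑ a ∈ Ico 1 (p / 2 + 1), a * q / p) + (∑ a ∈ Ico 1 (q / 2 + 1), a * p / q) =
      p / 2 * (q / 2) := by
  have hswap :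
      #{x ∈ Ico 1 (q / 2 + 1) ×ˢ Ico 1 (p / 2 + 1) | x.2 * q ≤ x.1 * p} =
        #{x ∈ Ico 1 (p / 2 + 1) ×ˢ Ico 1 (q / 2 + 1) | x.1 * q ≤ x.2 * p} :=
    card_equiv (Equiv.prodComm _ _)
      (fun ⟨_, _⟩ => by
        simp +contextual only [mem_filter, and_self_iff, Prod.swap_prod_mk,
          forall_true_iff, mem_product, Equiv.prodComm_apply, and_assoc, and_left_comm])
  have hdisj :
      Disjoint {x ∈ Ico 1 (p / 2 + 1) ×ˢ Ico 1 (q / 2 + 1) | x.2 * p ≤ x.1 * q}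
        {x ∈ Ico 1 (p / 2 + 1) ×ˢ Ico 1 (q / 2 + 1) | x.1 * q ≤ x.2 * p} := by
    apply disjoint_filter.2 fun x hx hpq' hqp => ?_
    have heq : x.2 * p = x.1 * q := le_antisymm hpq' hqp
    have hx1 : 1 ≤ x.1 ∧ x.1 ≤ p / 2 := by
      have := (mem_product.mp hx).1
      simp only [mem_Ico, Nat.lt_succ_iff] at this; exact this
    have hdvd : p ∣ x.1 := by
      have : p ∣ x.1 * q := ⟨x.2, by rw [← heq, mul_comm]⟩
      exact (Nat.Coprime.dvd_of_dvd_mul_right hpq this)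
    have : p ≤ x.1 := Nat.le_of_dvd (by omega) hdvd
    have : p / 2 < p := Nat.div_lt_self hp0 (by norm_num)
    omega
  have hunion :
      {x ∈ Ico 1 (p / 2 + 1) ×ˢ Ico 1 (q / 2 + 1) | x.2 * p ≤ x.1 * q} ∪
          {x ∈ Ico 1 (p / 2 + 1) ×ˢ Ico 1 (q / 2 + 1) | x.1 * q ≤ x.2 * p} =
        Ico 1 (p / 2 + 1) ×ˢ Ico 1 (q / 2 + 1) := by
    rw [← filter_or]
    exact filter_true_of_mem fun x _ => le_total (x.2 * p) (x.1 * q)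
  rw [sum_Ico_eq_card_lt' hp0, sum_Ico_eq_card_lt' hq0, hswap, ← card_union_of_disjoint hdisj,
    hunion, card_product]
  simp only [Nat.card_Ico, Nat.add_sub_cancel]


lemma neg_one_pow_congr {a b : ℕ} (h : a % 2 = b % 2) : ((-1 : ℤ)) ^ a = (-1) ^ b := by
  rcases Nat.even_or_odd a with ha | ha
  · rw [ha.neg_one_pow, (Nat.even_iff.2 (by rw [← h]; exact Nat.even_iff.1 ha)).neg_one_pow]
  · rw [ha.neg_one_pow, (Nat.odd_iff.2 (by rw [← h]; exact Nat.odd_iff.1 ha)).neg_one_pow]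

lemma G_add (h k q : ℕ) :
    G (h + 2 * k * q) k = G h k + 2 * q * ∑ n ∈ Finset.Ico 1 (k / 2 + 1), n := by
  unfold G
  rw [Finset.mul_sum, ← Finset.sum_add_distrib]
  refine Finset.sum_congr rfl fun n hn => ?_
  have hk : 0 < k := by
    rcases Nat.eq_zero_or_pos k with h0 | h0
    · subst h0; simp at hn
    · exact h0
  have h1 : n * (h + 2 * k * q) = n * h + 2 * q * n * k := by ring
  rw [h1, Nat.add_mul_div_right _ _ hk]

lemma mod_two_G_add (h k q : ℕ) : G (h + 2 * k * q) k % 2 = G h k % 2 := by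
  rw [G_add, mul_assoc]; omega

theorem eisenstein : ∀ k : ℕ, Odd k → ∀ h : ℕ, Odd h → Nat.Coprime h k →
    jacobiSym h k = (-1) ^ G h k := by
  intro k
  induction k using Nat.strong_induction_on with
  | _ k IH =>
  intro hk h hh hcop
  by_cases hk1 : k = 1
  · subst hk1; simp [jacobiSym.one_right, G]
  have hkpos : 0 < k := hk.pos
  have hk3 : 3 ≤ k := by rcases hk with ⟨t, ht⟩; omega
  -- the core step, for h' < k
  have core : ∀ h' : ℕ, Odd h' → h' < k → Nat.Coprime h' k →
      jacobiSym h' k = (-1) ^ G h' k := by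
    intro h' hodd hlt hcop'
    have hpos : 0 < h' := hodd.pos
    have recip := jacobiSym.quadratic_reciprocity hodd hk
    have latt := lattice hkpos hpos hcop'.symm
    have ih := IH h' hlt hodd k hk hcop'.symm
    rw [recip, ih, ← pow_add]
    apply neg_one_pow_congr
    have : h' / 2 * (k / 2) = k / 2 * (h' / 2) := Nat.mul_comm _ _
    unfold G at *
    omega
  -- reduce h mod 2k
  set h₀ := h % (2 * k) with hh₀def
  have hdecomp : h₀ + 2 * k * (h / (2 * k)) = h := Nat.mod_add_div h (2 * k)
  have hh₀odd : Odd h₀ := by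
    have : h₀ % 2 = h % 2 := Nat.mod_mod_of_dvd h ⟨k, rfl⟩
    rw [Nat.odd_iff] at *; omega
  have hh₀k : h₀ % k = h % k := Nat.mod_mod_of_dvd h ⟨2, by ring⟩
  have hh₀lt : h₀ < 2 * k := Nat.mod_lt h (by omega)
  have hcop₀ : Nat.Coprime h₀ k := by
    have h1 : Nat.gcd k h₀ = Nat.gcd k h := by
      rw [Nat.gcd_rec k h₀, Nat.gcd_rec k h, hh₀k]
    have := hcop
    unfold Nat.Coprime at *
    rw [Nat.gcd_comm h₀ k, h1, Nat.gcd_comm k h]; exact hcop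
  have hJ₀ : jacobiSym h k = jacobiSym h₀ k := by
    apply jacobiSym.mod_left'
    rw [← Int.natCast_mod, ← Int.natCast_mod, hh₀k]
  have hG₀ : G h k % 2 = G h₀ k % 2 := by
    conv_lhs => rw [← hdecomp]
    rw [mod_two_G_add]
  have hne : h₀ ≠ k := by
    intro hekk
    have : Nat.gcd h₀ k = k := by rw [hekk, Nat.gcd_self]
    rw [hcop₀] at this; omega
  rcases lt_or_gt_of_ne hne with hlt | hgt
  · rw [hJ₀, core h₀ hh₀odd hlt hcop₀]
    exact (neg_one_pow_congr hG₀).symm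
  · -- h₀ > k : use h₁ = 2k - h₀
    set h₁ := 2 * k - h₀ with hh₁def
    have hh₁sum : h₀ + h₁ = 2 * k := by omega
    have hh₁odd : Odd h₁ := by rw [Nat.odd_iff] at *; omega
    have hh₁pos : 0 < h₁ := by
      rcases Nat.eq_zero_or_pos h₁ with h0 | h0
      · exfalso; rw [Nat.odd_iff, h0] at hh₁odd; omega
      · exact h0
    have hh₁lt : h₁ < k := by omega
    have hcop₁ : Nat.Coprime h₁ k := by
      have hd : Nat.gcd h₁ k ∣ h₀ := by
        have d1 : Nat.gcd h₁ k ∣ 2 * k := Dvd.dvd.mul_left (Nat.gcd_dvd_right h₁ k) 2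
        have d2 : Nat.gcd h₁ k ∣ h₁ := Nat.gcd_dvd_left h₁ k
        have := Nat.dvd_sub d1 d2
        rwa [show 2 * k - h₁ = h₀ by omega] at this
      have : Nat.gcd h₁ k ∣ Nat.gcd h₀ k := Nat.dvd_gcd hd (Nat.gcd_dvd_right h₁ k)
      rw [hcop₀] at this
      exact Nat.dvd_one.mp this
    -- termwise: n*h₀/k + n*h₁/k + 1 = 2*n  for n in range
    have hterm : ∀ n ∈ Finset.Ico 1 (k / 2 + 1), n * h₀ / k + n * h₁ / k + 1 = 2 * n := by
      intro n hn
      rw [Finset.mem_Ico] at hn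
      obtain ⟨hn1, hn2⟩ := hn
      set f := n * h₀ / k with hf
      set r := n * h₀ % k with hr
      have e2 : k * f + r = n * h₀ := Nat.div_add_mod _ _
      have hrk : r < k := Nat.mod_lt _ hkpos
      have hrne : r ≠ 0 := by
        intro h0
        have : k ∣ n * h₀ := by
          have := Nat.dvd_of_mod_eq_zero (hr ▸ h0)
          exact this
        have : k ∣ n := (Nat.Coprime.dvd_of_dvd_mul_right (hcop₀.symm) this)
        have := Nat.le_of_dvd (by omega) this
        omega
      have e1 : n * h₀ + n * h₁ = 2 * (n * k) := by
        calc n * h₀ + n * h₁ = n * (h₀ + h₁) := by ring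
        _ = n * (2 * k) := by rw [hh₁sum]
        _ = 2 * (n * k) := by ring
      have hflt : f < 2 * n := by
        rw [hf, Nat.div_lt_iff_lt_mul hkpos]
        calc n * h₀ + 0 < n * h₀ + n * h₁ := by
              have : 0 < n * h₁ := Nat.mul_pos (by omega) hh₁pos
              omega
        _ = 2 * (n * k) := e1
        _ = 2 * n * k := by ring
      obtain ⟨g, hg⟩ : ∃ g, 2 * n = g + f + 1 := ⟨2 * n - f - 1, by omega⟩
      have e3 : k * g + k * f + k = 2 * (n * k) := by
        calc k * g + k * f + k = k * (g + f + 1) := by ring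
        _ = k * (2 * n) := by rw [← hg]
        _ = 2 * (n * k) := by ring
      have ediv : n * h₁ = k * g + (k - r) := by omega
      have : n * h₁ / k = g := div_eq_of hkpos ediv (by omega)
      omega
    have hGsum : G h₀ k + G h₁ k + k / 2 = 2 * ∑ n ∈ Finset.Ico 1 (k / 2 + 1), n := by
      unfold G
      have hcard : #(Finset.Ico 1 (k / 2 + 1)) = k / 2 := by simp
      calc (∑ n ∈ Finset.Ico 1 (k / 2 + 1), n * h₀ / k) +
            (∑ n ∈ Finset.Ico 1 (k / 2 + 1), n * h₁ / k) + k / 2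
          = ∑ n ∈ Finset.Ico 1 (k / 2 + 1), (n * h₀ / k + n * h₁ / k + 1) := by
            rw [Finset.sum_add_distrib, Finset.sum_add_distrib, Finset.sum_const,
              smul_eq_mul, mul_one, hcard]
        _ = ∑ n ∈ Finset.Ico 1 (k / 2 + 1), 2 * n := Finset.sum_congr rfl hterm
        _ = 2 * ∑ n ∈ Finset.Ico 1 (k / 2 + 1), n := by rw [Finset.mul_sum]
    have hJneg : jacobiSym h₀ k = (-1) ^ (k / 2) * jacobiSym h₁ k := by
      have hmod : (h₀ : ℤ) % k = (-(h₁ : ℤ)) % k := by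
        have : (h₀ : ℤ) = -(h₁ : ℤ) + k * 2 := by
          have := hh₁sum; omega
        rw [this, Int.add_mul_emod_self_left]
      rw [jacobiSym.mod_left' hmod, jacobiSym.neg _ hk,
        ZMod.χ₄_eq_neg_one_pow (Nat.odd_iff.1 hk)]
    rw [hJ₀, hJneg, core h₁ hh₁odd hh₁lt hcop₁, ← pow_add]
    apply (neg_one_pow_congr ?_).symm
    omega


theorem main_step (h k : ℕ) (hh : Odd h) (hk : Odd k) (hcop : Nat.Coprime h k) :
    ∃ m : ℤ, ((k : ℚ) - 1) / 2 - 6 * k * dedekindSum h k = 2 * m ∧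
      (jacobiSym h k : ℚ) = (-1 : ℚ) ^ m := by
  have hkpos : 0 < k := hk.pos
  have hkQ : (k : ℚ) ≠ 0 := by positivity
  have hrlt : ∀ n : ℕ, rr h k n < k := fun n => Nat.mod_lt _ hkpos
  have hrne : ∀ n : ℕ, 1 ≤ n → n < k → rr h k n ≠ 0 := by
    intro n h1 h2 h0
    have hdvd : k ∣ n * h := Nat.dvd_of_mod_eq_zero h0
    have : k ∣ n := (Nat.Coprime.dvd_of_dvd_mul_right hcop.symm hdvd)
    have := Nat.le_of_dvd (by omega) this
    omega
  -- Step 1 : rewrite the Dedekind sum over ℕ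
  have step1 : dedekindSum h k =
      ∑ n ∈ Finset.Ico 1 k,
        (((rr h k n : ℕ) : ℚ) / k - 1/2) * ((n : ℚ) / k - 1/2) := by
    unfold dedekindSum
    have hmap : Finset.Icc (1 : ℤ) (k : ℤ) =
        Finset.map ⟨(Nat.cast : ℕ → ℤ), Nat.cast_injective⟩ (Finset.Icc 1 k) := by
      ext x
      simp only [Finset.mem_Icc, Finset.mem_map, Function.Embedding.coeFn_mk]
      constructor
      · intro hx; exact ⟨x.toNat, by omega, by omega⟩
      · rintro ⟨a, ha, rfl⟩; omega
    rw [hmap, Finset.sum_map]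
    simp only [Function.Embedding.coeFn_mk, Int.cast_natCast]
    have hIcc : Finset.Icc 1 k = Finset.Ico 1 (k + 1) := by rw [Finset.Ico_add_one_right_eq_Icc]
    rw [hIcc, Finset.sum_Ico_succ_top (by omega : 1 ≤ k)]
    have h1 : ((h : ℚ)) * ((k : ℕ) : ℚ) / k = ((h : ℕ) : ℚ) := by
      field_simp
    have h2 : (((k : ℕ)) : ℚ) / k = ((1 : ℕ) : ℚ) := by
      field_simp
      norm_num
    rw [h1, h2, saw_natCast, saw_natCast, mul_zero, add_zero]
    refine Finset.sum_congr rfl fun n hn => ?_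
    rw [Finset.mem_Ico] at hn
    have e1 : (h : ℚ) * (n : ℚ) / k = ((n * h : ℕ) : ℚ) / k := by push_cast; ring
    rw [e1, saw_of_mod _ _ hkpos (hrne n hn.1 hn.2),
      show ((n:ℕ):ℚ) / (k:ℚ) = ((n : ℕ) : ℚ)/(k:ℕ) from rfl,
      saw_of_mod n k hkpos (by rw [Nat.mod_eq_of_lt hn.2]; omega),
      Nat.mod_eq_of_lt hn.2]
    rfl
  -- the integer sums
  set A : ℤ := ∑ n ∈ Finset.Ico 1 k, (2 * (rr h k n : ℤ) - k) * (2 * n - k) with hAdef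
  set S₁ : ℤ := ∑ n ∈ Finset.Ico 1 k, (n : ℤ) with hS₁def
  set S₂ : ℤ := ∑ n ∈ Finset.Ico 1 k, (n : ℤ)^2 with hS₂def
  set C : ℤ := ∑ n ∈ Finset.Ico 1 k, (n : ℤ) * (ff h k n : ℤ) with hCdef
  set F₂ : ℤ := ∑ n ∈ Finset.Ico 1 k, (ff h k n : ℤ)^2 with hF₂def
  set Gz : ℤ := (G h k : ℤ) with hGzdef
  -- Step 2: dedekindSum * 4k² = A
  have step2 : dedekindSum h k * (4 * (k:ℚ)^2) = (A : ℚ) := by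
    rw [step1, Finset.sum_mul, hAdef, Int.cast_sum]
    refine Finset.sum_congr rfl fun n _ => ?_
    push_cast
    field_simp
    ring
  -- Step 3: permutation n ↦ rr n
  have hperm : ∀ F : ℕ → ℤ,
      (∑ n ∈ Finset.Ico 1 k, F (rr h k n)) = ∑ n ∈ Finset.Ico 1 k, F n := by
    intro F
    by_cases hk1 : k = 1
    · subst hk1; simp
    have hk2 : 1 < k := by omega
    obtain ⟨h', -, hinv⟩ := Nat.exists_mul_mod_eq_one_of_coprime hcop hk2
    have hcop' : Nat.Coprime h' k := by
      have hd : Nat.gcd h' k ∣ 1 := by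
        have d1 : Nat.gcd h' k ∣ h * h' := Dvd.dvd.mul_left (Nat.gcd_dvd_left h' k) h
        have d2 : Nat.gcd h' k ∣ k := Nat.gcd_dvd_right h' k
        have : Nat.gcd h' k ∣ h * h' % k := (Nat.dvd_mod_iff d2).mpr d1
        rwa [hinv] at this
      exact Nat.dvd_one.mp hd
    refine Finset.sum_nbij' (fun n => rr h k n) (fun m => m * h' % k) ?_ ?_ ?_ ?_ ?_
    · intro n hn
      rw [Finset.mem_Ico] at hn ⊢
      have := hrne n hn.1 hn.2
      have := hrlt n
      omega
    · intro m hm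
      rw [Finset.mem_Ico] at hm ⊢
      have hne0 : m * h' % k ≠ 0 := by
        intro h0
        have hdvd : k ∣ m * h' := Nat.dvd_of_mod_eq_zero h0
        have : k ∣ m := Nat.Coprime.dvd_of_dvd_mul_right hcop'.symm hdvd
        have := Nat.le_of_dvd (by omega) this
        omega
      have := Nat.mod_lt (m * h') hkpos
      omega
    · intro n hn
      rw [Finset.mem_Ico] at hn
      show rr h k n * h' % k = n
      rw [rr, Nat.mod_mul_mod, mul_assoc, Nat.mul_mod, hinv,
        Nat.mod_eq_of_lt hn.2, mul_one, Nat.mod_eq_of_lt hn.2]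
    · intro m hm
      rw [Finset.mem_Ico] at hm
      show rr h k (m * h' % k) = m
      rw [rr, Nat.mod_mul_mod, mul_assoc, mul_comm h' h, Nat.mul_mod, hinv,
        Nat.mod_eq_of_lt hm.2, mul_one, Nat.mod_eq_of_lt hm.2]
    · intro n _; rfl
  have hsum_r : (∑ n ∈ Finset.Ico 1 k, (rr h k n : ℤ)) = S₁ := hperm (fun m => (m : ℤ))
  have hsum_r2 : (∑ n ∈ Finset.Ico 1 k, (rr h k n : ℤ)^2) = S₂ := hperm (fun m => (m : ℤ)^2)
  have key : ∀ n : ℕ, (n : ℤ) * h - k * (ff h k n : ℤ) = (rr h k n : ℤ) := by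
    intro n
    have h1 := rr_ff h k n
    have h2 : ((k * ff h k n + rr h k n : ℕ) : ℤ) = ((n * h : ℕ) : ℤ) := by exact_mod_cast h1
    push_cast at h2
    linarith
  have hI2 : (h:ℤ)^2 * S₂ + (k:ℤ)^2 * F₂ - 2*h*k*C = S₂ := by
    have e : (h:ℤ)^2 * S₂ + (k:ℤ)^2 * F₂ - 2*(h:ℤ)*k*C
        = ∑ n ∈ Finset.Ico 1 k, ((n:ℤ)*h - k*(ff h k n : ℤ))^2 := by
      rw [hS₂def, hF₂def, hCdef, Finset.mul_sum, Finset.mul_sum, Finset.mul_sum,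
        ← Finset.sum_add_distrib, ← Finset.sum_sub_distrib]
      exact Finset.sum_congr rfl fun n _ => by ring
    rw [e, show (∑ n ∈ Finset.Ico 1 k, ((n:ℤ)*h - k*(ff h k n : ℤ))^2)
        = ∑ n ∈ Finset.Ico 1 k, (rr h k n : ℤ)^2 from
      Finset.sum_congr rfl fun n _ => by rw [key n], hsum_r2]
  have hT : (∑ n ∈ Finset.Ico 1 k, (n:ℤ) * (rr h k n : ℤ)) = (h:ℤ)*S₂ - k*C := by
    rw [hS₂def, hCdef, Finset.mul_sum, Finset.mul_sum, ← Finset.sum_sub_distrib]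
    refine Finset.sum_congr rfl fun n _ => ?_
    rw [← key n]; ring
  have hcard : (#(Finset.Ico 1 k) : ℤ) = (k:ℤ) - 1 := by
    rw [Nat.card_Ico]; omega
  have hAe : A = 4*((h:ℤ)*S₂ - (k:ℤ)*C) - 4*(k:ℤ)*S₁ + (k:ℤ)^2*((k:ℤ)-1) := by
    have e : A = 4*(∑ n ∈ Finset.Ico 1 k, (n:ℤ)*(rr h k n : ℤ))
        - 2*(k:ℤ)*(∑ n ∈ Finset.Ico 1 k, (rr h k n : ℤ))
        - 2*(k:ℤ)*S₁ + (#(Finset.Ico 1 k) : ℤ)*(k:ℤ)^2 := by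
      have e0 : (#(Finset.Ico 1 k) : ℤ)*(k:ℤ)^2 = ∑ _n ∈ Finset.Ico 1 k, (k:ℤ)^2 := by
        rw [Finset.sum_const, nsmul_eq_mul]
      rw [hAdef, hS₁def, e0, Finset.mul_sum, Finset.mul_sum, Finset.mul_sum,
        ← Finset.sum_sub_distrib, ← Finset.sum_sub_distrib, ← Finset.sum_add_distrib]
      exact Finset.sum_congr rfl fun n _ => by ring
    rw [e, hT, hsum_r, hcard]; ring
  have hS1c : 2*S₁ = (k:ℤ)*((k:ℤ)-1) := by rw [hS₁def]; exact sum_Ico_id k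
  have hS2c : 6*S₂ = (k:ℤ)*((k:ℤ)-1)*(2*(k:ℤ)-1) := by rw [hS₂def]; exact sum_Ico_sq k
  -- pairing
  set t := k / 2 with ht
  have htk : k = 2*t + 1 := by have := Nat.odd_iff.1 hk; omega
  have hffpair : ∀ n, 1 ≤ n → n < k → (ff h k n : ℤ) + (ff h k (k - n) : ℤ) = (h:ℤ) - 1 := by
    intro n h1 h2
    have hhpos : 0 < h := hh.pos
    have hfl : ff h k n < h := by
      rw [ff, Nat.div_lt_iff_lt_mul hkpos]
      calc n * h < k * h := (Nat.mul_lt_mul_right hhpos).mpr h2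
      _ = h * k := Nat.mul_comm _ _
    obtain ⟨g, hg⟩ : ∃ g, h = g + ff h k n + 1 := ⟨h - ff h k n - 1, by omega⟩
    have e1 : (k - n) * h + n * h = k * h := by
      rw [← Nat.add_mul, Nat.sub_add_cancel (le_of_lt h2)]
    have e2 := rr_ff h k n
    have e3 : k*g + k*(ff h k n) + k = k*h := by
      calc k*g + k*(ff h k n) + k = k*(g + ff h k n + 1) := by ring
      _ = k*h := by rw [← hg]
    have hrn := hrne n h1 h2
    have hrl := hrlt n
    have e4 : (k - n)*h = k*g + (k - rr h k n) := by omega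
    have e5 : ff h k (k - n) = g := div_eq_of hkpos e4 (by omega)
    rw [e5]
    have : ((h:ℕ):ℤ) = ((g + ff h k n + 1 : ℕ) : ℤ) := by exact_mod_cast hg
    push_cast at this
    linarith
  have hGz_half : Gz = ∑ n ∈ Finset.Ico 1 (t+1), (ff h k n : ℤ) := by
    rw [hGzdef, G, ← ht, Nat.cast_sum]
    rfl
  have hsplit : F₂ = (∑ n ∈ Finset.Ico 1 (t+1), (ff h k n : ℤ)^2)
      + ∑ n ∈ Finset.Ico (t+1) k, (ff h k n : ℤ)^2 := by
    rw [hF₂def, ← Finset.sum_Ico_consecutive _ (by omega : 1 ≤ t+1) (by omega : t+1 ≤ k)]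
  have hrefl : (∑ n ∈ Finset.Ico (t+1) k, (ff h k n : ℤ)^2)
      = ∑ n ∈ Finset.Ico 1 (t+1), ((h:ℤ) - 1 - (ff h k n : ℤ))^2 := by
    refine Finset.sum_nbij' (fun n => k - n) (fun n => k - n) ?_ ?_ ?_ ?_ ?_
    · intro n hn; rw [Finset.mem_Ico] at hn ⊢; omega
    · intro n hn; rw [Finset.mem_Ico] at hn ⊢; omega
    · intro n hn; rw [Finset.mem_Ico] at hn; omega
    · intro n hn; rw [Finset.mem_Ico] at hn; omega
    · intro n hn; rw [Finset.mem_Ico] at hn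
      have hp := hffpair (k - n) (by omega) (by omega)
      rw [show k - (k - n) = n by omega] at hp
      have : (ff h k n : ℤ) = (h:ℤ) - 1 - (ff h k (k - n) : ℤ) := by linarith
      rw [this]
  obtain ⟨aa, ha⟩ := (Int.odd_coe_nat h).mpr hh
  obtain ⟨bb, hb⟩ := (Int.odd_coe_nat k).mpr hk
  have hw4 : (4:ℤ) ∣ F₂ - 2*Gz := by
    have e : F₂ - 2*Gz = ∑ n ∈ Finset.Ico 1 (t+1),
        ((ff h k n : ℤ)^2 + ((h:ℤ)-1-(ff h k n:ℤ))^2 - 2*(ff h k n:ℤ)) := by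
      rw [hsplit, hrefl, hGz_half, Finset.mul_sum, ← Finset.sum_add_distrib,
        ← Finset.sum_sub_distrib]
    rw [e]
    refine Finset.dvd_sum fun n _ => ?_
    obtain ⟨e', he⟩ := Int.even_mul_succ_self ((ff h k n : ℤ) - 1)
    exact ⟨e' + aa^2 - aa*(ff h k n:ℤ), by
      linear_combination ((h:ℤ) + 2*aa - 1 - 2*(ff h k n : ℤ))*ha + 2*he⟩
  obtain ⟨w, hw⟩ := hw4
  obtain ⟨e₁, he₁⟩ := Int.even_mul_succ_self aa
  obtain ⟨e₂, he₂⟩ := Int.even_mul_succ_self (bb - 1)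
  have h2cancel : 2*((h:ℤ)*k*C) = 2*((k:ℤ)^2*Gz + 2*(k:ℤ)^2*w + 4*e₁*S₂) := by
    linear_combination (-1)*hI2 + (k:ℤ)^2*hw + S₂*((h:ℤ) + 2*aa + 1)*ha + 4*S₂*he₁
  have hcancel : (h:ℤ)*k*C = (k:ℤ)^2*Gz + 2*(k:ℤ)^2*w + 4*e₁*S₂ :=
    mul_left_cancel₀ two_ne_zero h2cancel
  have hCG : C - Gz = 2*( -(2*aa*bb+aa+bb)*C + (2*bb^2+2*bb)*Gz + (k:ℤ)^2*w + 2*e₁*S₂ ) := by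
    linear_combination hcancel - (C*(k:ℤ))*ha + (Gz + Gz*(k:ℤ) + 2*Gz*bb - C - 2*C*aa)*hb
  have hb1 : ((k:ℤ)-1)*(3*(k:ℤ)+1) - 2*(h:ℤ)*((k:ℤ)-1)*(2*(k:ℤ)-1)
      = 8*(-(e₂ + aa*bb*(4*bb+1))) := by
    linear_combination (-2 + 6*(k:ℤ) - 4*(k:ℤ)^2)*ha
      + (3 - (k:ℤ) - 2*bb + 4*aa - 8*aa*(k:ℤ) - 16*aa*bb)*hb - 4*he₂
  set u₀ : ℤ := -(e₂ + aa*bb*(4*bb+1)) + C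
      + (-(2*aa*bb+aa+bb)*C + (2*bb^2+2*bb)*Gz + (k:ℤ)^2*w + 2*e₁*S₂) with hu₀
  have hBp : ((k:ℤ)-1)*(3*(k:ℤ)+1) - 2*(h:ℤ)*((k:ℤ)-1)*(2*(k:ℤ)-1) + 12*C - 4*Gz = 8*u₀ := by
    rw [hu₀]
    linear_combination hb1 + 4*hCG
  have hK : (k:ℤ)*((k:ℤ)-1) - 3*A = 4*(k:ℤ)*(Gz + 2*u₀) := by
    linear_combination (-3)*hAe - 2*(h:ℤ)*hS2c + 6*(k:ℤ)*hS1c + (k:ℤ)*hBp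
  refine ⟨Gz + 2*u₀, ?_, ?_⟩
  · have hKQ : ((k:ℚ))*((k:ℚ)-1) - 3*(A:ℚ) = 4*(k:ℚ)*(((Gz:ℤ):ℚ) + 2*((u₀:ℤ):ℚ)) := by
      exact_mod_cast hK
    have main : (2*(k:ℚ)) * ( (((k:ℚ))-1)/2 - 6*(k:ℚ)*dedekindSum h k - 2*(((Gz + 2*u₀ : ℤ)):ℚ) ) = 0 := by
      push_cast
      linear_combination (-3)*step2 + hKQ
    rcases mul_eq_zero.mp main with h0 | h0
    · exact absurd h0 (by positivity)
    · linarith [h0]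
  · have hE := eisenstein k hk h hh hcop
    rw [hE]
    push_cast
    rw [show ((Gz + 2*u₀ : ℤ)) = ((G h k : ℕ) : ℤ) + 2*u₀ from by rw [hGzdef]]
    rw [zpow_add₀ (by norm_num : (-1:ℚ) ≠ 0), zpow_natCast]
    rw [show ((2:ℤ)*u₀) = (2:ℤ)*u₀ from rfl, zpow_mul]
    norm_num
lemma saw_add_int (x : ℚ) (m : ℤ) : dedekindSaw (x + m) = dedekindSaw x := by
  simp [dedekindSaw, Int.fract_add_intCast]

lemma dedekindSum_congr {d e : ℤ} {c : ℕ} (hc : 0 < c) (hmod : (c:ℤ) ∣ e - d) :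
    dedekindSum d c = dedekindSum e c := by
  unfold dedekindSum
  refine Finset.sum_congr rfl fun n _ => ?_
  obtain ⟨j, hj⟩ := hmod
  have hcQ : (c:ℚ) ≠ 0 := by positivity
  have heq : ((e:ℚ)) * n / c = (d:ℚ)*n/c + ((j*n : ℤ) : ℚ) := by
    have he : (e:ℚ) = d + c*j := by
      have : (e:ℚ) - d = c*j := by exact_mod_cast congrArg (fun z : ℤ => (z:ℚ)) hj
      linarith
    rw [he]
    push_cast
    field_simp
  push_cast
  rw [heq, saw_add_int]

end DedekindJacobi

theorem jacobiSym_eq_neg_one_pow_dedekindSum (d : ℤ) (c : ℕ) (hc : Odd c) (hcpos : 0 < c)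
    (hcop : Int.gcd d c = 1) :
    ∃ m : ℤ, ((c : ℚ) - 1) / 2 - 6 * c * dedekindSum d c = 2 * m ∧
      (jacobiSym d c : ℚ) = (-1 : ℚ) ^ m := by
  have hcz : (0:ℤ) < (c:ℤ) := by exact_mod_cast hcpos
  set d₀ : ℤ := d % c with hd₀
  have hd₀nonneg : 0 ≤ d₀ := Int.emod_nonneg d (by omega)
  have hcast : ((d₀.toNat : ℕ) : ℤ) = d₀ := Int.toNat_of_nonneg hd₀nonneg
  set h : ℕ := if Odd d₀.toNat then d₀.toNat else d₀.toNat + c with hhdef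
  have h1 : (c:ℤ) ∣ d₀ - d := ⟨-(d/c), by rw [hd₀, Int.emod_def]; ring⟩
  have hmod : (c:ℤ) ∣ (h:ℤ) - d := by
    by_cases hcase : Odd d₀.toNat
    · rw [hhdef, if_pos hcase, hcast]; exact h1
    · rw [hhdef, if_neg hcase]
      push_cast [hcast]
      obtain ⟨j, hj⟩ := h1
      exact ⟨j + 1, by linear_combination hj⟩
  have hhodd : Odd h := by
    rw [hhdef]
    by_cases hcase : Odd d₀.toNat
    · rw [if_pos hcase]; exact hcase
    · rw [if_neg hcase]
      have h2 := Nat.odd_iff.1 hc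
      rw [Nat.odd_iff] at hcase ⊢
      omega
  have hhcop : Nat.Coprime h c := by
    have hpd : ((Nat.gcd h c : ℕ) : ℤ) ∣ d := by
      have d1 : ((Nat.gcd h c : ℕ) : ℤ) ∣ (h:ℤ) := Int.natCast_dvd_natCast.mpr (Nat.gcd_dvd_left _ _)
      have d2 : ((Nat.gcd h c : ℕ) : ℤ) ∣ (c:ℤ) := Int.natCast_dvd_natCast.mpr (Nat.gcd_dvd_right _ _)
      have d3 : ((Nat.gcd h c : ℕ) : ℤ) ∣ (h:ℤ) - d := dvd_trans d2 hmod
      have := dvd_sub d1 d3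
      simpa using this
    have hp1 : Nat.gcd h c ∣ d.natAbs := Int.natCast_dvd.mp hpd
    have hp2 : Nat.gcd h c ∣ Int.gcd d c := Nat.dvd_gcd hp1 (by
      simpa [Int.gcd] using Nat.gcd_dvd_right h c)
    rw [hcop] at hp2
    exact Nat.dvd_one.mp hp2
  obtain ⟨m, hm1, hm2⟩ := DedekindJacobi.main_step h c hhodd hc hhcop
  have hmodeq : d % (c:ℤ) = (h:ℤ) % (c:ℤ) := Int.modEq_iff_dvd.mpr hmod
  have hJ : jacobiSym d c = jacobiSym h c := jacobiSym.mod_left' hmodeq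
  refine ⟨m, ?_, ?_⟩
  · rw [DedekindJacobi.dedekindSum_congr hcpos hmod]
    exact hm1
  · rw [hJ]
    exact hm2
end

section
/- Let p ≡ 3 (mod 4) be prime, let (d,c) be a positive integer solution of d² - pc² = 1 with c ≥ 1, and let a, b be integers with b ≥ 1 odd, b | a² - p, and gcd(d+ac, cb) = 1. Then s(d+ac, cb) = s(d-ac, cb), where s denotes the Dedekind sum. -/
lemma saw_int_add (m : ℤ) (x : ℚ) : dedekindSaw (x + m) = dedekindSaw x := by
  unfold dedekindSaw
  rw [Int.fract_add_intCast]

lemma saw_emod (k : ℤ) (hk : k ≠ 0) (m : ℤ) :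
    dedekindSaw (((m % k : ℤ) : ℚ) / k) = dedekindSaw ((m : ℚ) / k) := by
  have h1 : (m : ℚ) / k = ((m % k : ℤ) : ℚ) / k + ((m / k : ℤ) : ℚ) := by
    have h : (m : ℤ) = m % k + k * (m / k) := (Int.emod_add_mul_ediv m k).symm
    have hq : (m : ℚ) = ((m % k : ℤ) : ℚ) + (k:ℚ) * ((m / k : ℤ):ℚ) := by
      exact_mod_cast congrArg Int.cast h
    rw [hq]; field_simp
  rw [h1, saw_int_add]

lemma saw_one : dedekindSaw 1 = 0 := by
  unfold dedekindSaw; norm_num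

lemma mem_helper (k v n : ℤ) (hk : 0 < k) (hv : IsCoprime v k)
    (hn : n ∈ Finset.Ico (1:ℤ) k) : (v * n) % k ∈ Finset.Ico (1:ℤ) k := by
  simp only [Finset.mem_Ico] at hn ⊢
  refine ⟨?_, Int.emod_lt_of_pos _ hk⟩
  have h0 : 0 ≤ (v * n) % k := Int.emod_nonneg _ (by omega)
  rcases h0.lt_or_eq with h | h
  · omega
  · exfalso
    have hdvd : k ∣ v * n := Int.dvd_of_emod_eq_zero h.symm
    have : k ∣ n := hv.symm.dvd_of_dvd_mul_left hdvd
    have := Int.le_of_dvd (by omega) this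
    omega

lemma cancel_helper (k u v n : ℤ) (huv : u * v ≡ 1 [ZMOD k])
    (hn : n ∈ Finset.Ico (1:ℤ) k) : (u * ((v * n) % k)) % k = n := by
  simp only [Finset.mem_Ico] at hn
  have h1 : (u * ((v * n) % k)) % k = (u * (v * n)) % k := by
    conv_rhs => rw [Int.mul_emod]
    rw [Int.mul_emod, Int.emod_emod_of_dvd _ dvd_rfl]
  have h2 : u * (v * n) ≡ 1 * n [ZMOD k] := by
    rw [← mul_assoc]; exact huv.mul_right n
  rw [h1, h2, one_mul, Int.emod_eq_of_lt (by omega) hn.2]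

lemma dedekindSum_Ico (h k : ℤ) (hk : 0 < k) :
    dedekindSum h k = ∑ n ∈ Finset.Ico (1 : ℤ) k,
      dedekindSaw ((h : ℚ) * n / k) * dedekindSaw ((n : ℚ) / k) := by
  have hkq : (k : ℚ) ≠ 0 := by exact_mod_cast hk.ne'
  unfold dedekindSum
  rw [show Finset.Icc (1:ℤ) k = insert k (Finset.Ico 1 k) from by
    ext x; simp [Finset.mem_Ico, Finset.mem_insert]; omega,
    Finset.sum_insert (by simp)]
  have h0 : dedekindSaw ((k : ℚ) / k) = 0 := by rw [div_self hkq, saw_one]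
  rw [h0, mul_zero, zero_add]

lemma dedekindSum_inv (h h' k : ℤ) (hk : 0 < k) (hmod : h * h' ≡ 1 [ZMOD k]) :
    dedekindSum h k = dedekindSum h' k := by
  have hkq : (k : ℚ) ≠ 0 := by exact_mod_cast hk.ne'
  obtain ⟨s, hs⟩ := (Int.ModEq.dvd hmod)
  have hcop_h : IsCoprime h k := ⟨h', s, by linear_combination -hs⟩
  have hcop_h' : IsCoprime h' k := ⟨h, s, by linear_combination -hs⟩
  have hmod' : h' * h ≡ 1 [ZMOD k] := by rwa [mul_comm] at hmod
  rw [dedekindSum_Ico _ _ hk, dedekindSum_Ico _ _ hk]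
  refine Finset.sum_nbij' (fun n => (h * n) % k) (fun m => (h' * m) % k) ?_ ?_ ?_ ?_ ?_
  · exact fun n hn => mem_helper k h n hk hcop_h hn
  · exact fun m hm => mem_helper k h' m hk hcop_h' hm
  · exact fun n hn => cancel_helper k h' h n hmod' hn
  · exact fun m hm => cancel_helper k h h' m hmod hm
  · intro n hn
    have e1 : dedekindSaw ((h' : ℚ) * (((h * n) % k : ℤ) : ℚ) / k) = dedekindSaw ((n : ℚ) / k) := by
      have hc : (h' : ℚ) * (((h * n) % k : ℤ) : ℚ) = ((h' * ((h * n) % k) : ℤ) : ℚ) := by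
        push_cast; ring
      rw [hc, ← saw_emod k hk.ne', cancel_helper k h' h n hmod' hn]
    have e2 : dedekindSaw ((((h * n) % k : ℤ) : ℚ) / k) = dedekindSaw ((h : ℚ) * n / k) := by
      rw [saw_emod k hk.ne']
      congr 1
      push_cast; ring
    rw [e1, e2, mul_comm]

theorem dedekindSum_eq_of_pell (p : ℕ) (hp : p.Prime) (hp4 : p % 4 = 3) (d c : ℤ)
    (hd : 0 < d) (hc : 1 ≤ c) (hpell : d ^ 2 - (p : ℤ) * c ^ 2 = 1)
    (a b : ℤ) (hb : 1 ≤ b) (hbodd : Odd b) (hdvd : b ∣ a ^ 2 - (p : ℤ))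
    (hcop : Int.gcd (d + a * c) (c * b) = 1) :
    dedekindSum (d + a * c) (c * b) = dedekindSum (d - a * c) (c * b) := by
  have hk : 0 < c * b := by positivity
  apply dedekindSum_inv _ _ _ hk
  obtain ⟨t, ht⟩ := hdvd
  have : 1 - (d + a * c) * (d - a * c) = (c * b) * (c * t) := by
    linear_combination c ^ 2 * ht - hpell
  exact Int.modEq_iff_dvd.mpr ⟨c * t, this⟩
end

section
/- Let p ≡ 3 (mod 4) be prime and let I be a nonzero ideal of ℤ[√p] whose norm is divisible by 4. Then every element a + b√p of I has both a and b even; equivalently, I = (2)·I' for some ideal I'. -/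
/-- The norm of an ideal of `ℤ[√p]`: the cardinality of the quotient ring. -/
noncomputable def idealNorm {d : ℤ} (I : Ideal (ℤ√d)) : ℕ := Nat.card (ℤ√d ⧸ I)

section Aux

open Zsqrtd Submodule

variable {d : ℕ} [dnsq : Zsqrtd.Nonsquare d]

lemma aux_nonsquare : ∀ n : ℤ, (d : ℤ) ≠ n * n := by
  intro n h
  apply Zsqrtd.Nonsquare.ns d n.natAbs
  have : ((d : ℤ)).natAbs = (n * n).natAbs := by rw [h]
  simpa [Int.natAbs_mul] using this

/-- Cardinality of the quotient by the ideal generated by an integer `n`. -/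
lemma card_quot_intCast (n : ℤ) :
    Nat.card (ℤ√(d : ℤ) ⧸ Ideal.span {(n : ℤ√(d : ℤ))}) = n.natAbs * n.natAbs := by
  set k := n.natAbs with hk
  let φ₀ : ℤ√(d : ℤ) →+ ZMod k × ZMod k :=
    { toFun := fun z => ((z.re : ZMod k), (z.im : ZMod k))
      map_zero' := by simp
      map_add' := by intro a b; simp [Prod.ext_iff] }
  let φ := φ₀.toIntLinearMap
  have hsurj : Function.Surjective φ := by
    rintro ⟨u, v⟩
    obtain ⟨a, ha⟩ := ZMod.intCast_surjective u
    obtain ⟨b, hb⟩ := ZMod.intCast_surjective v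
    exact ⟨⟨a, b⟩, by simp [φ, φ₀, ha, hb]⟩
  have hker : LinearMap.ker φ
      = Submodule.restrictScalars ℤ (Ideal.span {(n : ℤ√(d : ℤ))}) := by
    ext z
    simp only [LinearMap.mem_ker, Submodule.restrictScalars_mem, Ideal.mem_span_singleton,
      Zsqrtd.intCast_dvd]
    constructor
    · intro h
      have h1 : (z.re : ZMod k) = 0 := congrArg Prod.fst h
      have h2 : (z.im : ZMod k) = 0 := congrArg Prod.snd h
      rw [ZMod.intCast_zmod_eq_zero_iff_dvd] at h1 h2
      constructor
      · exact (Int.natAbs_dvd).mp h1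
      · exact (Int.natAbs_dvd).mp h2
    · rintro ⟨h1, h2⟩
      have h1' : ((k : ℤ)) ∣ z.re := (Int.natAbs_dvd).mpr h1
      have h2' : ((k : ℤ)) ∣ z.im := (Int.natAbs_dvd).mpr h2
      have e1 : (z.re : ZMod k) = 0 := (ZMod.intCast_zmod_eq_zero_iff_dvd _ _).mpr h1'
      have e2 : (z.im : ZMod k) = 0 := (ZMod.intCast_zmod_eq_zero_iff_dvd _ _).mpr h2'
      exact Prod.ext e1 e2
  have e := (LinearMap.quotKerEquivOfSurjective φ hsurj)
  rw [hker] at e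
  have e2 := (Submodule.Quotient.restrictScalarsEquiv ℤ
    (Ideal.span {(n : ℤ√(d : ℤ))})).symm
  calc Nat.card (ℤ√(d : ℤ) ⧸ Ideal.span {(n : ℤ√(d : ℤ))})
      = Nat.card (ℤ√(d : ℤ) ⧸ Submodule.restrictScalars ℤ (Ideal.span {(n : ℤ√(d : ℤ))})) :=
        (Nat.card_congr e2.toEquiv).symm
    _ = Nat.card (ZMod k × ZMod k) := Nat.card_congr e.toEquiv
    _ = k * k := by rw [Nat.card_prod, Nat.card_zmod]

/-- The cardinality of the quotient by a principal ideal is the absolute value of the norm. -/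
lemma card_quot_span_singleton (x : ℤ√(d : ℤ)) (hx0 : x ≠ 0) :
    Nat.card (ℤ√(d : ℤ) ⧸ Ideal.span {x}) = (Zsqrtd.norm x).natAbs := by
  let R := ℤ√(d : ℤ)
  let n : ℤ := Zsqrtd.norm x
  have hxsx : (n : R) = x * star x := Zsqrtd.norm_eq_mul_conj x
  have hn0 : n ≠ 0 := fun h => hx0 ((Zsqrtd.norm_eq_zero aux_nonsquare x).mp h)
  -- the multiplication-by-x map
  let ψ : R →ₗ[R] R ⧸ Ideal.span {(n : R)} :=
    (Submodule.mkQ (Ideal.span {(n : R)})).comp (LinearMap.mulLeft R x)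
  have hrange : LinearMap.range ψ
      = Submodule.map (Submodule.mkQ (Ideal.span {(n : R)})) (Ideal.span {x}) := by
    rw [show ψ = (Submodule.mkQ (Ideal.span {(n : R)})).comp (LinearMap.mulLeft R x) from rfl,
      LinearMap.range_comp]
    congr 1
    ext y
    change y ∈ LinearMap.range (LinearMap.mulLeft R x) ↔ y ∈ Ideal.span {x}
    simp only [LinearMap.mem_range, LinearMap.mulLeft_apply, Ideal.mem_span_singleton]
    exact ⟨fun ⟨c, hc⟩ => ⟨c, hc.symm⟩, fun ⟨c, hc⟩ => ⟨c, hc.symm⟩⟩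
  have hker : LinearMap.ker ψ = Ideal.span {star x} := by
    ext y
    simp only [LinearMap.mem_ker, LinearMap.comp_apply, LinearMap.mulLeft_apply,
      Submodule.mkQ_apply, Submodule.Quotient.mk_eq_zero, Ideal.mem_span_singleton, ψ]
    constructor
    · rintro ⟨c, hc⟩
      refine ⟨c, mul_left_cancel₀ hx0 ?_⟩
      rw [hc, hxsx]; ring
    · rintro ⟨c, rfl⟩
      exact ⟨c, by rw [hxsx]; ring⟩
  -- conjugation gives an isomorphism of quotients
  have hstar : (Ideal.span {star x} : Ideal R)
      = Ideal.map (starRingAut : R ≃+* R) (Ideal.span {x}) := by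
    rw [Ideal.map_span, Set.image_singleton]; rfl
  have estar : (R ⧸ Ideal.span {x}) ≃+* (R ⧸ Ideal.span {star x}) :=
    Ideal.quotientEquiv (Ideal.span {x}) (Ideal.span {star x}) (starRingAut : R ≃+* R) hstar
  have hcardstar : Nat.card (R ⧸ Ideal.span {star x}) = Nat.card (R ⧸ Ideal.span {x}) :=
    (Nat.card_congr estar.toEquiv).symm
  have hle : Ideal.span {(n : R)} ≤ Ideal.span {x} :=
    Ideal.span_singleton_le_span_singleton.mpr ⟨star x, hxsx⟩
  have key := Submodule.card_quotient_mul_card_quotient (Ideal.span {x})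
    (Ideal.span {(n : R)}) hle
  have hmapcard : Nat.card (Submodule.map (Submodule.mkQ (Ideal.span {(n : R)}))
      (Ideal.span {x})) = Nat.card (R ⧸ Ideal.span {x}) := by
    rw [← hrange]
    have := LinearMap.quotKerEquivRange ψ
    rw [hker] at this
    rw [← Nat.card_congr this.toEquiv, hcardstar]
  rw [hmapcard, card_quot_intCast] at key
  have := Nat.mul_self_inj.mp key
  exact this

/-- The norm of an ideal divides the element norm of each of its elements. -/
lemma idealNorm_dvd_norm (I : Ideal (ℤ√(d : ℤ))) (x : ℤ√(d : ℤ)) (hx : x ∈ I) (hx0 : x ≠ 0) :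
    Nat.card (ℤ√(d : ℤ) ⧸ I) ∣ (Zsqrtd.norm x).natAbs := by
  have hle : Ideal.span {x} ≤ I := (Ideal.span_singleton_le_iff_mem _).mpr hx
  have key := Submodule.card_quotient_mul_card_quotient I (Ideal.span {x}) hle
  rw [card_quot_span_singleton x hx0] at key
  exact Dvd.intro_left _ key

end Aux

lemma evensq_cast (a : ℤ) (h : Even a) : ((a * a : ℤ) : ZMod 4) = 0 := by
  obtain ⟨c, rfl⟩ := h
  have : (4 : ℤ) ∣ (c + c) * (c + c) := ⟨c * c, by ring⟩
  exact_mod_cast (ZMod.intCast_zmod_eq_zero_iff_dvd _ 4).mpr (by exact_mod_cast this)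

lemma oddsq_cast (a : ℤ) (h : Odd a) : ((a * a : ℤ) : ZMod 4) = 1 := by
  obtain ⟨c, rfl⟩ := h
  have h4 : ((4 : ℤ) : ZMod 4) = 0 := by decide
  have : (2 * c + 1) * (2 * c + 1) = 4 * (c * c + c) + 1 := by ring
  rw [this]
  push_cast
  rw [show (4 : ZMod 4) = 0 by decide, zero_mul, zero_add]

theorem four_dvd_norm_imp (p : ℕ) (hp : p.Prime) (hp4 : p % 4 = 3)
    (I : Ideal (ℤ√(p : ℤ))) (hI : I ≠ ⊥) (hn : 4 ∣ idealNorm I) :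
    (∀ x ∈ I, Even (Zsqrtd.re x) ∧ Even (Zsqrtd.im x)) ∧
      ∃ I' : Ideal (ℤ√(p : ℤ)), I = Ideal.span {(2 : ℤ√(p : ℤ))} * I' := by
  haveI : Zsqrtd.Nonsquare p := by
    constructor
    intro n h
    have h2 : 2 ≤ p := hp.two_le
    rcases (Nat.Prime.eq_one_or_self_of_dvd hp n ⟨n, h⟩) with h1 | h1
    · rw [h1] at h; omega
    · rw [h1] at h; nlinarith
  have main : ∀ x ∈ I, Even (Zsqrtd.re x) ∧ Even (Zsqrtd.im x) := by
    intro x hx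
    by_cases hx0 : x = 0
    · subst hx0; exact ⟨Even.zero, Even.zero⟩
    have hdvd : Nat.card (ℤ√(p : ℤ) ⧸ I) ∣ (Zsqrtd.norm x).natAbs :=
      idealNorm_dvd_norm I x hx hx0
    have h4 : 4 ∣ (Zsqrtd.norm x).natAbs := dvd_trans hn hdvd
    have h4' : (4 : ℤ) ∣ Zsqrtd.norm x := by
      have h4'' : ((4 : ℤ)).natAbs ∣ (Zsqrtd.norm x).natAbs := by simpa using h4
      exact Int.natAbs_dvd_natAbs.mp h4''
    have hzero : ((Zsqrtd.norm x : ℤ) : ZMod 4) = 0 := by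
      refine (ZMod.intCast_zmod_eq_zero_iff_dvd _ 4).mpr ?_
      exact_mod_cast h4'
    rw [Zsqrtd.norm_def] at hzero
    push_cast at hzero
    have hsub : ((x.re * x.re : ℤ) : ZMod 4) = ((p : ℤ) : ZMod 4) * ((x.im * x.im : ℤ) : ZMod 4) := by
      push_cast
      push_cast at hzero
      linear_combination hzero
    have hpcast : ((p : ℤ) : ZMod 4) = 3 := by
      have : ((p % 4 : ℕ) : ZMod 4) = ((p : ℕ) : ZMod 4) := ZMod.natCast_mod p 4
      rw [hp4] at this
      push_cast
      rw [← this]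
      decide
    rw [hpcast] at hsub
    rcases Int.even_or_odd x.re with ha | ha <;> rcases Int.even_or_odd x.im with hb | hb
    · exact ⟨ha, hb⟩
    · rw [evensq_cast _ ha, oddsq_cast _ hb] at hsub
      exact absurd hsub (by decide)
    · rw [oddsq_cast _ ha, evensq_cast _ hb] at hsub
      exact absurd hsub (by decide)
    · rw [oddsq_cast _ ha, oddsq_cast _ hb] at hsub
      exact absurd hsub (by decide)
  refine ⟨main, ?_⟩
  -- construct I' = {y | 2 * y ∈ I}
  refine ⟨{ carrier := {y | 2 * y ∈ I}
            add_mem' := by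
              intro a b ha hb
              simp only [Set.mem_setOf_eq] at *
              have : 2 * a + 2 * b ∈ I := I.add_mem ha hb
              simpa [mul_add] using this
            zero_mem' := by simp
            smul_mem' := by
              intro c y hy
              simp only [Set.mem_setOf_eq, smul_eq_mul] at *
              have : c * (2 * y) ∈ I := I.mul_mem_left c hy
              simpa [mul_left_comm] using this }, ?_⟩
  apply le_antisymm
  · intro x hx
    obtain ⟨he, ho⟩ := main x hx
    obtain ⟨a, ha⟩ := he
    obtain ⟨b, hb⟩ := ho
    have hxeq : x = 2 * (⟨a, b⟩ : ℤ√(p : ℤ)) := by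
      ext <;> simp [Zsqrtd.re_mul, Zsqrtd.im_mul, ha, hb] <;> ring
    have hmem : (⟨a, b⟩ : ℤ√(p : ℤ)) ∈ ({y | 2 * y ∈ I} : Set (ℤ√(p : ℤ))) := by
      simp only [Set.mem_setOf_eq]
      rwa [← hxeq]
    rw [hxeq]
    exact Ideal.mul_mem_mul (Ideal.mem_span_singleton_self _) hmem
  · rw [Ideal.mul_le]
    intro a ha b hb
    obtain ⟨c, rfl⟩ := Ideal.mem_span_singleton.mp ha
    simp only [Submodule.mem_mk, AddSubmonoid.mem_mk, AddSubsemigroup.mem_mk,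
      Set.mem_setOf_eq] at hb
    have : c * (2 * b) ∈ I := I.mul_mem_left c hb
    simpa [mul_comm, mul_left_comm, mul_assoc] using this
end

section
/- Let p ≡ 3 (mod 4) be prime with p > 3, and let d + c√p be a totally positive unit (d² - pc² = 1, c odd, d even). Then 2(d - c√p) is a square in ℤ[√p], i.e., there exist integers R, S with 2(d - c√p) = (R - S√p)². -/
lemma aux_factor (p : ℤ) (hp : Prime p) (u v c : ℤ) (hu : 0 < u) (hv : 0 < v) (hc : 0 < c)
    (hcop : IsCoprime u v) (hm : u * v = p * c ^ 2) (hpd : p ∣ u) :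
    ∃ a b : ℤ, a * b = c ∧ p * a ^ 2 = u ∧ b ^ 2 = v := by
  obtain ⟨m, hmu⟩ := hpd
  have hp0 : p ≠ 0 := hp.ne_zero
  have hmv : m * v = c ^ 2 := by
    have : p * (m * v) = p * c ^ 2 := by rw [← hm, hmu]; ring
    exact mul_left_cancel₀ hp0 this
  have hm0 : 0 < m := by
    by_contra h
    push_neg at h
    nlinarith
  have hcopm : IsCoprime m v := hcop.of_isCoprime_of_dvd_left ⟨p, by rw [hmu]; ring⟩
  obtain ⟨a, ha⟩ := Int.sq_of_isCoprime hcopm hmv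
  obtain ⟨b, hb⟩ := Int.sq_of_isCoprime hcopm.symm (by rw [mul_comm]; exact hmv)
  have ha' : m = a ^ 2 := by rcases ha with h | h; exact h; nlinarith
  have hb' : v = b ^ 2 := by rcases hb with h | h; exact h; nlinarith
  have hab : (a * b) ^ 2 = c ^ 2 := by rw [mul_pow, ← ha', ← hb', hmv]
  have : (a * b - c) * (a * b + c) = 0 := by nlinarith
  rcases mul_eq_zero.mp this with h | h
  · exact ⟨a, b, by linarith, by rw [hmu, ha'], hb'.symm⟩
  · exact ⟨-a, b, by nlinarith, by rw [hmu, ha']; ring, hb'.symm⟩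

theorem two_mul_unit_is_square (p : ℕ) (hp : p.Prime) (hp4 : p % 4 = 3) (hp3 : 3 < p)
    (d c : ℤ) (hd : 0 < d) (hc : 0 < c) (hpell : d ^ 2 - (p : ℤ) * c ^ 2 = 1)
    (hcodd : Odd c) (hdeven : Even d) :
    ∃ R S : ℤ, (2 : ℤ√(p : ℤ)) * (⟨d, -c⟩ : ℤ√(p : ℤ)) = (⟨R, -S⟩ : ℤ√(p : ℤ)) ^ 2 := by
  obtain ⟨e, he⟩ := hdeven
  have hd2 : 2 ≤ d := by omega
  have hpprime : Prime (p : ℤ) := Int.prime_iff_natAbs_prime.mpr (by simpa using hp)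
  have hcop : IsCoprime (d - 1) (d + 1) := ⟨e, 1 - e, by rw [he]; ring⟩
  have hfac : (d - 1) * (d + 1) = (p : ℤ) * c ^ 2 := by nlinarith
  have hpdvd : (p : ℤ) ∣ (d - 1) * (d + 1) := ⟨c ^ 2, hfac⟩
  have key : ∃ a b : ℤ, a * b = c ∧ (p : ℤ) * a ^ 2 + b ^ 2 = 2 * d := by
    rcases hpprime.dvd_mul.mp hpdvd with h | h
    · obtain ⟨a, b, hab, h1, h2⟩ := aux_factor (p : ℤ) hpprime (d - 1) (d + 1) c
        (by omega) (by omega) hc hcop hfac h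
      exact ⟨a, b, hab, by linarith⟩
    · obtain ⟨a, b, hab, h1, h2⟩ := aux_factor (p : ℤ) hpprime (d + 1) (d - 1) c
        (by omega) (by omega) hc hcop.symm (by rw [← hfac]; ring) h
      exact ⟨a, b, hab, by linarith⟩
  obtain ⟨a, b, hab, hsum⟩ := key
  refine ⟨b, a, ?_⟩
  ext <;> simp [pow_two, Zsqrtd.re_mul, Zsqrtd.im_mul] <;> nlinarith
end

section
/- Let p ≡ 3 (mod 4) be prime and let b odd with b ≡ 1 (mod 4). If p ≡ 7 (mod 8), c odd, d even with d² - pc² = 1, a an integer with b | a² - p and gcd(2(d-ac), b) = 1, then the Jacobi symbol (2(d-ac)/b) = 1. -/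
lemma odd_sq_mod_eight {t : ℤ} (h : Odd t) : t ^ 2 % 8 = 1 := by
  obtain ⟨k, hk⟩ := h
  have h2 : Even (k * (k + 1)) := Int.even_mul_succ_self k
  obtain ⟨m, hm⟩ := h2
  have : t ^ 2 = 8 * m + 1 := by rw [hk]; linear_combination 4 * hm
  omega

theorem jacobiSym_two_mul_eq_one (p : ℕ) (hp : p.Prime) (hp4 : p % 4 = 3) (hp8 : p % 8 = 7)
    (d c a : ℤ) (b : ℕ) (hd : 0 < d) (hc : 0 < c)
    (hpell : d ^ 2 - (p : ℤ) * c ^ 2 = 1) (hcodd : Odd c) (hdeven : Even d)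
    (hbodd : Odd b) (hb4 : b % 4 = 1) (hdvd : (b : ℤ) ∣ a ^ 2 - (p : ℤ))
    (hcop : Int.gcd (2 * (d - a * c)) b = 1) :
    jacobiSym (2 * (d - a * c)) b = 1 := by
  have hpz : Prime (p : ℤ) := Nat.prime_iff_prime_int.mp hp
  have hp0 : (p : ℤ) ≠ 0 := hpz.ne_zero
  have hd2 : 2 ≤ d := by
    obtain ⟨k, hk⟩ := hdeven; omega
  have hfac : (d + 1) * (d - 1) = (p : ℤ) * c ^ 2 := by linear_combination hpell
  have hoddu : Odd (d + 1) := by obtain ⟨k, hk⟩ := hdeven; exact ⟨k, by omega⟩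
  have hoddv : Odd (d - 1) := by obtain ⟨k, hk⟩ := hdeven; exact ⟨k - 1, by omega⟩
  -- coprimality of d+1 and d-1
  have hcop_uv : IsCoprime (d + 1) (d - 1) := by
    rw [Int.isCoprime_iff_gcd_eq_one]
    have hg2 : (Int.gcd (d + 1) (d - 1) : ℤ) ∣ 2 := by
      have h1 := Int.gcd_dvd_left (a := d + 1) (b := d - 1)
      have h2 := Int.gcd_dvd_right (a := d + 1) (b := d - 1)
      have := dvd_sub h1 h2
      simpa using this
    have hg2' : Int.gcd (d + 1) (d - 1) ∣ 2 := by exact_mod_cast hg2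
    rcases (Nat.dvd_prime Nat.prime_two).mp hg2' with h | h
    · exact h
    · exfalso
      have h1 := Int.gcd_dvd_left (a := d + 1) (b := d - 1)
      rw [h] at h1
      obtain ⟨k, hk⟩ := h1
      obtain ⟨m, hm⟩ := hoddu
      omega
  have hpdvd : (p : ℤ) ∣ (d + 1) ∨ (p : ℤ) ∣ (d - 1) :=
    hpz.dvd_mul.mp ⟨c ^ 2, hfac⟩
  have hp8' : (p : ℤ) % 8 = 7 := by omega
  have hc2pos : (0 : ℤ) < c ^ 2 := by positivity
  rcases hpdvd with ⟨w, hw⟩ | ⟨w, hw⟩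
  · -- impossible case: p ∣ d + 1
    exfalso
    have hweq : w * (d - 1) = c ^ 2 := by
      have : (p : ℤ) * (w * (d - 1)) = (p : ℤ) * c ^ 2 := by
        rw [← hfac, hw]; ring
      exact mul_left_cancel₀ hp0 this
    have hcopw : IsCoprime w (d - 1) :=
      IsCoprime.of_isCoprime_of_dvd_left hcop_uv ⟨(p : ℤ), by rw [hw]; ring⟩
    obtain ⟨s, hs⟩ := Int.sq_of_isCoprime hcopw hweq
    obtain ⟨t, ht⟩ := Int.sq_of_isCoprime hcopw.symm (by rw [mul_comm]; exact hweq)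
    have hvpos : (0 : ℤ) < d - 1 := by omega
    have hwpos : (0 : ℤ) < w := by nlinarith
    have hts : d - 1 = t ^ 2 := by
      rcases ht with h | h
      · exact h
      · nlinarith [sq_nonneg t]
    have hws : w = s ^ 2 := by
      rcases hs with h | h
      · exact h
      · nlinarith [sq_nonneg s]
    -- s and t are odd since c is odd
    have hcst : c ^ 2 = (s * t) ^ 2 := by rw [← hweq, hws, hts]; ring
    have hstodd : Odd (s * t) := by
      rcases Int.even_or_odd (s * t) with he | ho
      · exfalso
        have : Even (c ^ 2) := by rw [hcst]; exact Int.even_pow.mpr ⟨he, by norm_num⟩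
        have : Even c := (Int.even_pow.mp this).1
        exact (Int.not_odd_iff_even.mpr this) hcodd
      · exact ho
    have hsodd : Odd s := (Int.odd_mul.mp hstodd).1
    have htodd : Odd t := (Int.odd_mul.mp hstodd).2
    have hs8 := odd_sq_mod_eight hsodd
    have ht8 := odd_sq_mod_eight htodd
    have hu8 : (d + 1) % 8 = 7 := by
      rw [hw, hws, Int.mul_emod, hp8', hs8]; norm_num
    omega
  · -- main case: p ∣ d - 1
    have hweq : (d + 1) * w = c ^ 2 := by
      have : (p : ℤ) * ((d + 1) * w) = (p : ℤ) * c ^ 2 := by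
        rw [← hfac, hw]; ring
      exact mul_left_cancel₀ hp0 this
    have hcopw : IsCoprime (d + 1) w :=
      IsCoprime.of_isCoprime_of_dvd_right hcop_uv ⟨(p : ℤ), by rw [hw]; ring⟩
    obtain ⟨s0, hs0⟩ := Int.sq_of_isCoprime hcopw hweq
    obtain ⟨t0, ht0⟩ := Int.sq_of_isCoprime hcopw.symm (by rw [mul_comm]; exact hweq)
    have hupos : (0 : ℤ) < d + 1 := by omega
    have hwpos : (0 : ℤ) < w := by nlinarith
    have hus : d + 1 = s0 ^ 2 := by
      rcases hs0 with h | h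
      · exact h
      · nlinarith [sq_nonneg s0]
    have hwt : w = t0 ^ 2 := by
      rcases ht0 with h | h
      · exact h
      · nlinarith [sq_nonneg t0]
    set s := |s0| with hsdef
    set t := |t0| with htdef
    have hus' : d + 1 = s ^ 2 := by rw [hsdef, sq_abs]; exact hus
    have hwt' : w = t ^ 2 := by rw [htdef, sq_abs]; exact hwt
    have hsnn : 0 ≤ s := abs_nonneg _
    have htnn : 0 ≤ t := abs_nonneg _
    have hcst : c = s * t := by
      have h1 : c ^ 2 = (s * t) ^ 2 := by rw [← hweq, hus', hwt']; ring
      have h2 : (c - s * t) * (c + s * t) = 0 := by linear_combination h1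
      rcases mul_eq_zero.mp h2 with h | h
      · linarith
      · exfalso; linarith [mul_nonneg hsnn htnn]
    have h2d : 2 * d = s ^ 2 + (p : ℤ) * t ^ 2 := by
      have : d - 1 = (p : ℤ) * t ^ 2 := by rw [hw, hwt']
      linarith [hus', this]
    obtain ⟨k, hk⟩ := hdvd
    have hkey : (s - a * t) ^ 2 - 2 * (d - a * c) = (b : ℤ) * (k * t ^ 2) := by
      linear_combination t ^ 2 * hk - h2d + 2 * a * hcst
    have hco1 : IsCoprime (2 * (d - a * c)) (b : ℤ) :=
      Int.isCoprime_iff_gcd_eq_one.mpr hcop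
    have hco2 : IsCoprime ((s - a * t) ^ 2) (b : ℤ) := by
      have heq : (s - a * t) ^ 2 = 2 * (d - a * c) + (b : ℤ) * (k * t ^ 2) := by
        linarith [hkey]
      rw [heq]
      exact hco1.add_mul_left_left _
    have hco3 : IsCoprime (s - a * t) (b : ℤ) :=
      (IsCoprime.pow_left_iff (by norm_num)).mp hco2
    have hmod : (2 * (d - a * c)) % (b : ℤ) = ((s - a * t) ^ 2) % (b : ℤ) :=
      Int.ModEq.symm (Int.modEq_iff_dvd.mpr ⟨-(k * t ^ 2), by linarith [hkey]⟩)
    rw [jacobiSym.mod_left' hmod]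
    exact jacobiSym.sq_one' (Int.isCoprime_iff_gcd_eq_one.mp hco3)
end
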